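/- Let L be a d×d Hermitian matrix with unit trace, let ρ̄ be a d×d density matrix, and let ρ̂ be any density matrix minimizing the Frobenius distance to L over all d×d density matrices. If ‖L − ρ̄‖ ≤ τ in spectral norm, then ‖ρ̂ − ρ̄‖ ≤ 2τ in spectral norm. -/

import Mathlib

open MeasureTheory Matrix
open scoped Kronecker ComplexOrder

/-- The spectral norm (operator norm on Euclidean space) of a complex matrix. -/
noncomputable def specNorm {m : Type*} [Fintype m] [DecidableEq m]
    (A : Matrix m m ℂ) : ℝ :=
  ‖Matrix.toEuclideanCLM (𝕜 := ℂ) A‖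

/-- The Frobenius norm `√tr(A†A)` of a complex matrix. -/
noncomputable def frobNorm {m : Type*} [Fintype m]
    (A : Matrix m m ℂ) : ℝ :=
  Real.sqrt ((Aᴴ * A).trace.re)

/-- The trace norm `tr √(A†A)` of a complex matrix. -/
noncomputable def traceNorm {m : Type*} [Fintype m] [DecidableEq m]
    (A : Matrix m m ℂ) : ℝ :=
  (((Matrix.posSemidef_conjTranspose_mul_self A).1.eigenvectorUnitary : Matrix m m ℂ) *
    Matrix.diagonal (((↑) : ℝ → ℂ) ∘ (√·) ∘ (Matrix.posSemidef_conjTranspose_mul_self A).1.eigenvalues) *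
    (star (Matrix.posSemidef_conjTranspose_mul_self A).1.eigenvectorUnitary : Matrix m m ℂ)).trace.re

/-- The residual spectral mass `Σ_r(A)`: for a Hermitian matrix with eigenvalues
`λ₁ ≥ … ≥ λ_d`, this is `Σ_{j=r+1}^d λ_j`, i.e. the trace minus the largest possible
sum of `r` eigenvalues (junk value `0` for non-Hermitian matrices). -/
noncomputable def residualMass {m : Type*} [Fintype m] [DecidableEq m]
    (r : ℕ) (A : Matrix m m ℂ) : ℝ :=
  if h : A.IsHermitian then
    A.trace.re - sSup {x : ℝ | ∃ s : Finset m, s.card = r ∧ x = ∑ i ∈ s, h.eigenvalues i}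
  else 0

/-- A density matrix: positive semidefinite with unit trace. -/
def IsDensity {m : Type*} [Fintype m] (A : Matrix m m ℂ) : Prop :=
  A.PosSemidef ∧ A.trace = 1

/-- A rank-one orthogonal projector. -/
def IsRankOneProj {m : Type*} [Fintype m] [DecidableEq m] (P : Matrix m m ℂ) : Prop :=
  Pᴴ = P ∧ P * P = P ∧ P.rank = 1

/-- A complex projective 2-design in dimension `d`: rank-one orthogonal projectors with
`Σ_k tr(P_k X) P_k = (M/(d(d+1))) (X + tr(X) 𝟙)` for all `X`. -/
def IsTwoDesign {d M : ℕ} (P : Fin M → Matrix (Fin d) (Fin d) ℂ) : Prop :=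
  (∀ k, IsRankOneProj (P k)) ∧
  ∀ X : Matrix (Fin d) (Fin d) ℂ,
    ∑ k, (P k * X).trace • P k
      = ((M : ℂ) / ((d : ℂ) * ((d : ℂ) + 1))) • (X + X.trace • (1 : Matrix (Fin d) (Fin d) ℂ))

/-- A single-qubit complex projective 2-design. -/
def IsQubitTwoDesign {m : ℕ} (P : Fin m → Matrix (Fin 2) (Fin 2) ℂ) : Prop :=
  (∀ k, IsRankOneProj (P k)) ∧
  ∀ X : Matrix (Fin 2) (Fin 2) ℂ,
    ∑ k, (P k * X).trace • P k
      = ((m : ℂ) / 6) • (X + X.trace • (1 : Matrix (Fin 2) (Fin 2) ℂ))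

/-- `n`-fold tensor product of `2×2` matrices, as a matrix indexed by functions
`Fin n → Fin 2`, with entries `(⊗_j A_j)(x,y) = Π_j A_j (x j) (y j)`. -/
noncomputable def nKron {n : ℕ} (A : Fin n → Matrix (Fin 2) (Fin 2) ℂ) :
    Matrix (Fin n → Fin 2) (Fin n → Fin 2) ℂ :=
  Matrix.of fun x y => ∏ j, A j (x j) (y j)

/-- Partial trace over the second tensor factor. -/
noncomputable def ptrace2 {m : Type*} [Fintype m] (A : Matrix (m × m) (m × m) ℂ) : Matrix m m ℂ :=
  Matrix.of fun a a' => ∑ b, A (a, b) (a', b)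


section PLSAux

open Matrix
open scoped ComplexOrder

variable {m : Type*} [Fintype m] [DecidableEq m]

/-- The real Frobenius inner product. -/
noncomputable def pip (A B : Matrix m m ℂ) : ℝ := ((Aᴴ * B).trace).re

omit [DecidableEq m] in
lemma frobNorm_eq_pip (A : Matrix m m ℂ) : frobNorm A = Real.sqrt (pip A A) := rfl

omit [DecidableEq m] in
lemma pip_self_eq (A : Matrix m m ℂ) : pip A A = ∑ i, ∑ j, Complex.normSq (A j i) := by
  simp only [pip, Matrix.trace, Matrix.mul_apply, Matrix.diag, conjTranspose_apply,
    Complex.re_sum]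
  congr 1; ext i; congr 1; ext j
  rw [show star (A j i) * A j i = ((Complex.normSq (A j i) : ℂ)) from
    (Complex.normSq_eq_conj_mul_self).symm ▸ rfl]
  simp

omit [DecidableEq m] in
lemma pip_self_nonneg (A : Matrix m m ℂ) : 0 ≤ pip A A := by
  rw [pip_self_eq]
  exact Finset.sum_nonneg fun i _ => Finset.sum_nonneg fun j _ => Complex.normSq_nonneg _

omit [DecidableEq m] in
lemma pip_self_eq_zero {A : Matrix m m ℂ} (h : pip A A = 0) : A = 0 := by
  rw [pip_self_eq] at h
  ext i j
  have h1 := (Finset.sum_eq_zero_iff_of_nonneg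
    (fun k _ => Finset.sum_nonneg fun l _ => Complex.normSq_nonneg _)).mp h j (Finset.mem_univ _)
  have h2 := (Finset.sum_eq_zero_iff_of_nonneg
    (fun l _ => Complex.normSq_nonneg _)).mp h1 i (Finset.mem_univ _)
  simpa [Complex.normSq_eq_zero] using h2

omit [DecidableEq m] in
lemma frobNorm_sq (A : Matrix m m ℂ) : frobNorm A ^ 2 = pip A A := by
  rw [frobNorm_eq_pip, Real.sq_sqrt (pip_self_nonneg A)]

omit [DecidableEq m] in
lemma pip_add_left (A B C : Matrix m m ℂ) : pip (A + B) C = pip A C + pip B C := by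
  simp [pip, Matrix.conjTranspose_add, Matrix.add_mul, Matrix.trace_add]

omit [DecidableEq m] in
lemma pip_symm (A B : Matrix m m ℂ) : pip A B = pip B A := by
  have : (Bᴴ * A).trace = star ((Aᴴ * B).trace) := by
    rw [← Matrix.trace_conjTranspose, Matrix.conjTranspose_mul, Matrix.conjTranspose_conjTranspose]
  simp [pip, this]

omit [DecidableEq m] in
lemma pip_add_right (A B C : Matrix m m ℂ) : pip A (B + C) = pip A B + pip A C := by
  rw [pip_symm, pip_add_left, pip_symm B A, pip_symm C A]

omit [DecidableEq m] in
lemma pip_sub_right (A B C : Matrix m m ℂ) : pip A (B - C) = pip A B - pip A C := by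
  have := pip_add_right A (B - C) C
  rw [sub_add_cancel] at this
  linarith

omit [DecidableEq m] in
lemma pip_expand (A B : Matrix m m ℂ) :
    pip (A + B) (A + B) = pip A A + 2 * pip A B + pip B B := by
  rw [pip_add_left, pip_add_right, pip_add_right, pip_symm B A]
  ring

omit [DecidableEq m] in
lemma herm_quad_real {B : Matrix m m ℂ} (hB : B.IsHermitian) (x : m → ℂ) :
    (starRingEnd ℂ) (star x ⬝ᵥ B *ᵥ x) = star x ⬝ᵥ B *ᵥ x := by
  have key : star (B *ᵥ x) ⬝ᵥ x = star (star x ⬝ᵥ B *ᵥ x) := star_dotProduct _ _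
  have key2 : star (B *ᵥ x) ⬝ᵥ x = star x ⬝ᵥ B *ᵥ x := by
    rw [star_mulVec, ← Matrix.dotProduct_mulVec, hB.eq]
  show star (star x ⬝ᵥ B *ᵥ x) = star x ⬝ᵥ B *ᵥ x
  rw [← key, key2]

lemma quad_le_spec (B : Matrix m m ℂ) (x : m → ℂ) :
    (star x ⬝ᵥ B *ᵥ x).re ≤ specNorm B * (star x ⬝ᵥ x).re := by
  set T := Matrix.toEuclideanCLM (𝕜 := ℂ) B with hT
  set v : EuclideanSpace ℂ m := (WithLp.equiv 2 (m → ℂ)).symm x with hv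
  have hTv : T v = (WithLp.equiv 2 (m → ℂ)).symm (B *ᵥ x) :=
    Matrix.toEuclideanCLM_toLp B x
  have h1 : (inner ℂ v (T v) : ℂ) = star x ⬝ᵥ B *ᵥ x := by
    rw [hTv]; simp [dotProduct, hv, WithLp.equiv_symm_apply, mul_comm, PiLp.inner_apply]
  have h2 : (inner ℂ v v : ℂ) = star x ⬝ᵥ x := by
    rw [hv, WithLp.equiv_symm_apply, PiLp.inner_apply]; simp [dotProduct, Complex.conj_mul']
  have h3 : ‖v‖ ^ 2 = (star x ⬝ᵥ x).re := by
    rw [← h2]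
    exact_mod_cast (inner_self_eq_norm_sq (𝕜 := ℂ) v).symm
  calc (star x ⬝ᵥ B *ᵥ x).re ≤ ‖(star x ⬝ᵥ B *ᵥ x : ℂ)‖ := Complex.re_le_norm _
    _ = ‖(inner ℂ v (T v) : ℂ)‖ := by rw [h1]
    _ ≤ ‖v‖ * ‖T v‖ := norm_inner_le_norm _ _
    _ ≤ ‖v‖ * (‖T‖ * ‖v‖) := by gcongr; exact T.le_opNorm v
    _ = ‖T‖ * ‖v‖ ^ 2 := by ring
    _ = specNorm B * (star x ⬝ᵥ x).re := by rw [h3]; rfl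

lemma psd_diag_re_nonneg {M : Matrix m m ℂ} (hM : M.PosSemidef) (i : m) : 0 ≤ (M i i).re := by
  have h := hM.dotProduct_mulVec_nonneg (Pi.single i 1)
  have heq : star (Pi.single i 1) ⬝ᵥ M *ᵥ (Pi.single i 1 : m → ℂ) = M i i := by
    simp [dotProduct, Matrix.mulVec_single, Pi.single_apply, Finset.sum_ite_eq']
  rw [heq] at h
  exact (Complex.le_def.mp h).1

lemma trace_unitary_conj (V : Matrix.unitaryGroup m ℂ) (D : Matrix m m ℂ) :
    ((V : Matrix m m ℂ) * D * star (V : Matrix m m ℂ)).trace = D.trace := by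
  rw [Matrix.trace_mul_cycle, (Unitary.mem_iff.mp V.prop).1, one_mul]

lemma specNorm_unitary_conj (V : Matrix.unitaryGroup m ℂ) (D : Matrix m m ℂ) :
    specNorm ((V : Matrix m m ℂ) * D * star (V : Matrix m m ℂ)) ≤ specNorm D := by
  set φ := Matrix.toEuclideanCLM (n := m) (𝕜 := ℂ)
  have hu : φ (V : Matrix m m ℂ) ∈ unitary (EuclideanSpace ℂ m →L[ℂ] EuclideanSpace ℂ m) := by
    constructor
    · rw [← map_star, ← _root_.map_mul, (Unitary.mem_iff.mp V.prop).1, _root_.map_one]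
    · rw [← map_star, ← _root_.map_mul, (Unitary.mem_iff.mp V.prop).2, _root_.map_one]
  have hu' : φ (star (V : Matrix m m ℂ))
      ∈ unitary (EuclideanSpace ℂ m →L[ℂ] EuclideanSpace ℂ m) := by
    rw [map_star]; exact Unitary.star_mem hu
  refine ContinuousLinearMap.opNorm_le_bound _ (norm_nonneg _) fun v => ?_
  have happ : φ ((V : Matrix m m ℂ) * D * star (V : Matrix m m ℂ)) v
      = φ (V : Matrix m m ℂ) (φ D (φ (star (V : Matrix m m ℂ)) v)) := by
    simp [_root_.map_mul, ContinuousLinearMap.mul_apply]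
  rw [happ, ContinuousLinearMap.norm_map_of_mem_unitary hu]
  calc ‖φ D (φ (star (V : Matrix m m ℂ)) v)‖ ≤ ‖φ D‖ * ‖φ (star (V : Matrix m m ℂ)) v‖ :=
        (φ D).le_opNorm _
    _ = specNorm D * ‖v‖ := by rw [ContinuousLinearMap.norm_map_of_mem_unitary hu']; rfl

lemma specNorm_diagonal_le {c : m → ℂ} {τ : ℝ} (hτ : 0 ≤ τ) (h : ∀ i, ‖c i‖ ≤ τ) :
    specNorm (Matrix.diagonal c) ≤ τ := by
  refine ContinuousLinearMap.opNorm_le_bound _ hτ fun v => ?_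
  set x : m → ℂ := WithLp.equiv 2 (m → ℂ) v with hx
  have hv : v = (WithLp.equiv 2 (m → ℂ)).symm x := rfl
  have happ : Matrix.toEuclideanCLM (𝕜 := ℂ) (Matrix.diagonal c) v
      = (WithLp.equiv 2 (m → ℂ)).symm (Matrix.diagonal c *ᵥ x) := by
    rw [hv]; exact Matrix.toEuclideanCLM_toLp _ x
  rw [happ]
  rw [EuclideanSpace.norm_eq, EuclideanSpace.norm_eq]
  rw [show τ * Real.sqrt (∑ i, ‖v i‖ ^ 2) = Real.sqrt (τ^2 * ∑ i, ‖v i‖ ^ 2) by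
    rw [Real.sqrt_mul (by positivity), Real.sqrt_sq hτ]]
  apply Real.sqrt_le_sqrt
  rw [Finset.mul_sum]
  apply Finset.sum_le_sum
  intro i _
  have hentry : ((WithLp.equiv 2 (m → ℂ)).symm (Matrix.diagonal c *ᵥ x) : EuclideanSpace ℂ m) i
      = c i * x i := by
    simp [Matrix.mulVec_diagonal]
  rw [hentry]
  have hvx : ‖(v : EuclideanSpace ℂ m) i‖ = ‖x i‖ := rfl
  rw [hvx, norm_mul, mul_pow]
  have h2 : ‖c i‖ ^ 2 ≤ τ ^ 2 := by
    have := h i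
    nlinarith [norm_nonneg (c i)]
  nlinarith [sq_nonneg (‖x i‖)]

lemma smul_one_sub_psd {B : Matrix m m ℂ} {τ : ℝ} (hB : B.IsHermitian)
    (h : specNorm B ≤ τ) : ((τ : ℂ) • (1 : Matrix m m ℂ) - B).PosSemidef := by
  have h1 : ((τ:ℂ) • (1 : Matrix m m ℂ)).IsHermitian := by
    unfold Matrix.IsHermitian
    rw [Matrix.conjTranspose_smul, Matrix.conjTranspose_one, Complex.star_def,
      Complex.conj_ofReal]
  refine Matrix.PosSemidef.of_dotProduct_mulVec_nonneg (h1.sub hB) fun y => ?_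
  have hmv : ((τ:ℂ) • (1 : Matrix m m ℂ) - B) *ᵥ y = (τ:ℂ) • y - B *ᵥ y := by
    rw [Matrix.sub_mulVec, Matrix.smul_mulVec, Matrix.one_mulVec]
  rw [hmv, dotProduct_sub, dotProduct_smul]
  have hyy : 0 ≤ star y ⬝ᵥ y := dotProduct_star_self_nonneg y
  have hyyre : 0 ≤ (star y ⬝ᵥ y).re := (Complex.le_def.mp hyy).1
  have hyyim : (star y ⬝ᵥ y).im = 0 := ((Complex.le_def.mp hyy).2).symm
  have hqre : (star y ⬝ᵥ B *ᵥ y).re ≤ τ * (star y ⬝ᵥ y).re :=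
    le_trans (quad_le_spec B y) (by nlinarith)
  have hqim : (star y ⬝ᵥ B *ᵥ y).im = 0 :=
    Complex.conj_eq_iff_im.mp (herm_quad_real hB y)
  rw [smul_eq_mul, Complex.le_def]
  constructor
  · simp only [Complex.sub_re, Complex.mul_re, Complex.ofReal_re, Complex.ofReal_im,
      Complex.zero_re, zero_mul, sub_zero]
    linarith [hqre]
  · simp only [Complex.sub_im, Complex.mul_im, Complex.ofReal_re, Complex.ofReal_im,
      Complex.zero_im, hyyim, hqim, mul_zero, zero_mul]
    ring

lemma specNorm_add_le (A B : Matrix m m ℂ) : specNorm (A + B) ≤ specNorm A + specNorm B := by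
  unfold specNorm
  rw [_root_.map_add]
  exact norm_add_le _ _

lemma specNorm_neg (A : Matrix m m ℂ) : specNorm (-A) = specNorm A := by
  unfold specNorm
  rw [_root_.map_neg, norm_neg]

lemma specNorm_nonneg (A : Matrix m m ℂ) : 0 ≤ specNorm A := norm_nonneg _

end PLSAux


/-- The projection onto density matrices at most doubles the spectral-norm
error: if `‖L − ρ̄‖ ≤ τ` then `‖ρ̂ − ρ̄‖ ≤ 2τ`. -/
theorem pls_projection_spectral_bound
    {d : ℕ} (L ρbar ρhat : Matrix (Fin d) (Fin d) ℂ)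
    (hL : L.IsHermitian) (hLtr : L.trace = 1)
    (hρbar : IsDensity ρbar)
    (hρhatDens : IsDensity ρhat)
    (hρhatMin : ∀ σ : Matrix (Fin d) (Fin d) ℂ, IsDensity σ →
      frobNorm (L - ρhat) ≤ frobNorm (L - σ))
    (τ : ℝ) (hτ : specNorm (L - ρbar) ≤ τ) :
    specNorm (ρhat - ρbar) ≤ 2 * τ := by
  classical
  have hτ0 : (0 : ℝ) ≤ τ := le_trans (specNorm_nonneg _) hτ
  set V := hL.eigenvectorUnitary with hV
  set x := hL.eigenvalues with hxdef
  set Vm : Matrix (Fin d) (Fin d) ℂ := (V : Matrix (Fin d) (Fin d) ℂ) with hVm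
  have hVV : star Vm * Vm = 1 := (Unitary.mem_iff.mp V.prop).1
  have hVV' : Vm * star Vm = 1 := (Unitary.mem_iff.mp V.prop).2
  have hdiagL : star Vm * L * Vm = Matrix.diagonal (fun i => (x i : ℂ)) := by
    have h := hL.conjStarAlgAut_star_eigenvectorUnitary
    rw [Unitary.conjStarAlgAut_star_apply] at h
    exact h
  have hspecL : L = Vm * Matrix.diagonal (fun i => (x i : ℂ)) * star Vm := by
    conv_rhs => rw [← hdiagL]
    simp only [Matrix.mul_assoc]
    rw [hVV', Matrix.mul_one, ← Matrix.mul_assoc, hVV', Matrix.one_mul]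
  have hsum : ∑ i, x i = 1 := by
    have h1 : (Matrix.diagonal (fun i => (x i : ℂ))).trace = 1 := by
      rw [← hdiagL, Matrix.trace_mul_cycle, hVV', Matrix.one_mul, hLtr]
    rw [Matrix.trace_diagonal] at h1
    have h2 := congrArg Complex.re h1
    simpa [Complex.re_sum] using h2
  have csub : ∀ A B : Matrix (Fin d) (Fin d) ℂ,
      star Vm * (A - B) * Vm = star Vm * A * Vm - star Vm * B * Vm := fun A B => by
    rw [Matrix.mul_sub, Matrix.sub_mul]
  have cone : star Vm * ((τ:ℂ) • (1 : Matrix (Fin d) (Fin d) ℂ)) * Vm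
      = (τ:ℂ) • (1 : Matrix (Fin d) (Fin d) ℂ) := by
    rw [Matrix.mul_smul, Matrix.smul_mul, Matrix.mul_one, hVV]
  have cpsd : ∀ {M : Matrix (Fin d) (Fin d) ℂ}, M.PosSemidef →
      (star Vm * M * Vm).PosSemidef := by
    intro M hM
    rw [Matrix.star_eq_conjTranspose]
    exact hM.conjTranspose_mul_mul_same Vm
  have hdens_diag : ∀ {S : Matrix (Fin d) (Fin d) ℂ}, IsDensity S →
      (∀ i, 0 ≤ ((star Vm * S * Vm) i i).re) ∧ (∑ i, ((star Vm * S * Vm) i i).re) = 1 := by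
    intro S hS
    refine ⟨fun i => psd_diag_re_nonneg (cpsd hS.1) i, ?_⟩
    have h1 : (star Vm * S * Vm).trace = 1 := by
      rw [Matrix.trace_mul_cycle, hVV', Matrix.one_mul, hS.2]
    have h2 := congrArg Complex.re h1
    simpa [Matrix.trace, Matrix.diag, Complex.re_sum] using h2
  have hr0 : ∀ i, 0 ≤ ((star Vm * ρbar * Vm) i i).re := (hdens_diag hρbar).1
  have hrsum : ∑ i, ((star Vm * ρbar * Vm) i i).re = 1 := (hdens_diag hρbar).2
  have hHermSub : (L - ρbar).IsHermitian := hL.sub hρbar.1.isHermitian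
  have hpsd1 : ((τ:ℂ) • (1 : Matrix (Fin d) (Fin d) ℂ) - (L - ρbar)).PosSemidef :=
    smul_one_sub_psd hHermSub hτ
  have hpsd2 : ((τ:ℂ) • (1 : Matrix (Fin d) (Fin d) ℂ) - (ρbar - L)).PosSemidef := by
    apply smul_one_sub_psd (hρbar.1.isHermitian.sub hL)
    rw [show ρbar - L = -(L - ρbar) from (neg_sub _ _).symm, specNorm_neg]
    exact hτ
  have hxr : ∀ i, x i - τ ≤ ((star Vm * ρbar * Vm) i i).re := by
    intro i
    have h := psd_diag_re_nonneg (cpsd hpsd1) i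
    have e : star Vm * ((τ:ℂ) • (1 : Matrix (Fin d) (Fin d) ℂ) - (L - ρbar)) * Vm
        = (τ:ℂ) • (1 : Matrix (Fin d) (Fin d) ℂ)
          - (Matrix.diagonal (fun i => (x i : ℂ)) - star Vm * ρbar * Vm) := by
      rw [csub, cone, csub, hdiagL]
    rw [e] at h
    simp only [Matrix.sub_apply, Matrix.smul_apply, Matrix.one_apply_eq, smul_eq_mul, mul_one,
      Matrix.diagonal_apply_eq, Complex.sub_re, Complex.ofReal_re] at h
    linarith
  have hxlow : ∀ i, -τ ≤ x i := by
    intro i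
    have h := psd_diag_re_nonneg (cpsd hpsd2) i
    have e : star Vm * ((τ:ℂ) • (1 : Matrix (Fin d) (Fin d) ℂ) - (ρbar - L)) * Vm
        = (τ:ℂ) • (1 : Matrix (Fin d) (Fin d) ℂ)
          - (star Vm * ρbar * Vm - Matrix.diagonal (fun i => (x i : ℂ))) := by
      rw [csub, cone, csub, hdiagL]
    rw [e] at h
    simp only [Matrix.sub_apply, Matrix.smul_apply, Matrix.one_apply_eq, smul_eq_mul, mul_one,
      Matrix.diagonal_apply_eq, Complex.sub_re, Complex.ofReal_re] at h
    have := hr0 i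
    linarith
  -- intermediate value: choose the threshold θ
  set f : ℝ → ℝ := fun t => ∑ i, max (x i - t) 0 with hfdef
  have hfc : Continuous f := by
    apply continuous_finset_sum
    intro i _
    exact (continuous_const.sub continuous_id).max continuous_const
  have hf0 : 1 ≤ f 0 := by
    have hfv : f 0 = ∑ i, max (x i) 0 := by simp [hfdef]
    rw [hfv, ← hsum]
    exact Finset.sum_le_sum fun i _ => le_max_left _ _
  have hfτ : f τ ≤ 1 := by
    rw [← hrsum]
    simp only [hfdef]
    exact Finset.sum_le_sum fun i _ => max_le (by linarith [hxr i]) (hr0 i)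
  obtain ⟨θ, hθmem, hθeq⟩ := intermediate_value_Icc' hτ0 hfc.continuousOn ⟨hfτ, hf0⟩
  obtain ⟨hθ0, hθτ⟩ := hθmem
  set z : Fin d → ℝ := fun i => max (x i - θ) 0 with hzdef
  have hzsum : ∑ i, z i = 1 := hθeq
  set Dz : Matrix (Fin d) (Fin d) ℂ := Matrix.diagonal (fun i => (z i : ℂ)) with hDz
  set σs : Matrix (Fin d) (Fin d) ℂ := Vm * Dz * star Vm with hσs
  have hDzpsd : Dz.PosSemidef := by
    apply Matrix.PosSemidef.diagonal
    intro i
    exact Complex.zero_le_real.mpr (le_max_right _ _)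
  have hσsdens : IsDensity σs := by
    constructor
    · rw [hσs, Matrix.star_eq_conjTranspose]
      exact hDzpsd.mul_mul_conjTranspose_same Vm
    · rw [hσs, trace_unitary_conj V Dz, hDz, Matrix.trace_diagonal]
      rw [show ∑ i, ((z i : ℝ):ℂ) = ((∑ i, z i : ℝ) : ℂ) by push_cast; ring]
      rw [hzsum]
      norm_num
  have hminid : ∀ i, x i - z i = min (x i) θ := by
    intro i
    simp only [hzdef]
    rcases le_total θ (x i) with h | h
    · rw [max_eq_left (by linarith : (0:ℝ) ≤ x i - θ), min_eq_right h]; ring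
    · rw [max_eq_right (by linarith : x i - θ ≤ (0:ℝ)), min_eq_left h]; ring
  have hdd : Matrix.diagonal (fun i => (x i:ℂ)) - Dz
      = Matrix.diagonal (fun i => ((min (x i) θ : ℝ) : ℂ)) := by
    rw [hDz, Matrix.diagonal_sub]
    exact congrArg Matrix.diagonal (funext fun i => by
      rw [show (x i:ℂ) - (z i:ℂ) = ((x i - z i : ℝ):ℂ) by push_cast; ring, hminid i])
  have hmindiag : L - σs = Vm * Matrix.diagonal (fun i => ((min (x i) θ : ℝ) : ℂ)) * star Vm := by
    rw [hspecL, hσs, ← Matrix.sub_mul, ← Matrix.mul_sub, hdd]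
  have hspecA : specNorm (L - σs) ≤ τ := by
    rw [hmindiag]
    refine le_trans (specNorm_unitary_conj V _) (specNorm_diagonal_le hτ0 fun i => ?_)
    rw [Complex.norm_real, Real.norm_eq_abs, abs_le]
    constructor
    · have h1 := hxlow i
      have h2 : -τ ≤ min (x i) θ := le_min (by linarith) (by linarith)
      linarith
    · calc min (x i) θ ≤ θ := min_le_right _ _
        _ ≤ τ := hθτ
  have pip_conj : ∀ (c : Fin d → ℝ) (S : Matrix (Fin d) (Fin d) ℂ),
      pip (Vm * Matrix.diagonal (fun i => (c i : ℂ)) * star Vm) S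
        = ∑ i, c i * ((star Vm * S * Vm) i i).re := by
    intro c S
    have hherm : (Vm * Matrix.diagonal (fun i => (c i:ℂ)) * star Vm)ᴴ
        = Vm * Matrix.diagonal (fun i => (c i:ℂ)) * star Vm := by
      rw [Matrix.conjTranspose_mul, Matrix.conjTranspose_mul, Matrix.diagonal_conjTranspose,
        Matrix.star_eq_conjTranspose, Matrix.conjTranspose_conjTranspose]
      rw [show star (fun i => (c i:ℂ)) = fun i => (c i:ℂ) by
        funext i; simp [Complex.star_def, Complex.conj_ofReal]]
      rw [Matrix.mul_assoc]
    show ((Vm * Matrix.diagonal (fun i => (c i:ℂ)) * star Vm)ᴴ * S).trace.re = _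
    rw [hherm]
    have t1 : Vm * Matrix.diagonal (fun i => (c i:ℂ)) * star Vm * S
        = Vm * (Matrix.diagonal (fun i => (c i:ℂ)) * star Vm * S) := by
      simp only [Matrix.mul_assoc]
    rw [t1, Matrix.trace_mul_comm]
    have t2 : Matrix.diagonal (fun i => (c i:ℂ)) * star Vm * S * Vm
        = Matrix.diagonal (fun i => (c i:ℂ)) * (star Vm * S * Vm) := by
      simp only [Matrix.mul_assoc]
    rw [t2]
    rw [Matrix.trace, Complex.re_sum]
    apply Finset.sum_congr rfl
    intro i _
    rw [Matrix.diag_apply, Matrix.diagonal_mul]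
    simp [Complex.mul_re]
  have hWσs : star Vm * σs * Vm = Dz := by
    rw [hσs]
    simp only [← Matrix.mul_assoc]
    rw [hVV, Matrix.one_mul, Matrix.mul_assoc, hVV, Matrix.mul_one]
  have hpipσs : pip (L - σs) σs = θ := by
    rw [hmindiag, pip_conj, hWσs]
    have hstep : ∀ i, min (x i) θ * ((Dz i i).re) = θ * z i := by
      intro i
      rw [hDz, Matrix.diagonal_apply_eq, Complex.ofReal_re]
      rcases le_total θ (x i) with h | h
      · rw [min_eq_right h]
      · rw [hzdef]
        have hz0 : max (x i - θ) 0 = 0 := max_eq_right (by linarith)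
        simp only [hz0]
        ring
    calc ∑ i, min (x i) θ * ((Dz i i).re) = ∑ i, θ * z i :=
          Finset.sum_congr rfl fun i _ => hstep i
      _ = θ := by rw [← Finset.mul_sum, hzsum, mul_one]
  have hpiple : ∀ S, IsDensity S → pip (L - σs) S ≤ θ := by
    intro S hS
    rw [hmindiag, pip_conj]
    obtain ⟨hS0, hSsum⟩ := hdens_diag hS
    calc ∑ i, min (x i) θ * ((star Vm * S * Vm) i i).re
        ≤ ∑ i, θ * ((star Vm * S * Vm) i i).re :=
          Finset.sum_le_sum fun i _ =>
            mul_le_mul_of_nonneg_right (min_le_right _ _) (hS0 i)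
      _ = θ := by rw [← Finset.mul_sum, hSsum, mul_one]
  have hsplit : L - ρhat = (L - σs) + (σs - ρhat) := by abel
  have hexp : frobNorm (L - ρhat)^2
      = pip (L-σs) (L-σs) + 2 * pip (L-σs) (σs - ρhat) + pip (σs-ρhat) (σs-ρhat) := by
    rw [frobNorm_sq, hsplit, pip_expand]
  have hcross : 0 ≤ pip (L - σs) (σs - ρhat) := by
    rw [pip_sub_right, hpipσs]
    linarith [hpiple ρhat hρhatDens]
  have hmin := hρhatMin σs hσsdens
  have hminsq : frobNorm (L - ρhat)^2 ≤ frobNorm (L - σs)^2 := by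
    have h0 : 0 ≤ frobNorm (L - ρhat) := Real.sqrt_nonneg _
    nlinarith
  have hG : frobNorm (L - σs)^2 = pip (L-σs) (L-σs) := frobNorm_sq _
  have hzero : pip (σs - ρhat) (σs - ρhat) ≤ 0 := by linarith
  have heq0 : σs - ρhat = 0 := pip_self_eq_zero (le_antisymm hzero (pip_self_nonneg _))
  have hρσ : ρhat = σs := (sub_eq_zero.mp heq0).symm
  have hfinal : ρhat - ρbar = (ρhat - L) + (L - ρbar) := by abel
  calc specNorm (ρhat - ρbar) ≤ specNorm (ρhat - L) + specNorm (L - ρbar) := by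
        rw [hfinal]; exact specNorm_add_le _ _
    _ ≤ τ + τ := by
        apply add_le_add _ hτ
        rw [show ρhat - L = -(L - σs) by rw [hρσ, neg_sub]]
        rw [specNorm_neg]
        exact hspecA
    _ = 2 * τ := by ring
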